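/- Let p ∈ (0,1), let K be a p-core CRG, and let x be a nonnegative weight vector summing to 1 attaining the minimum g_K(p). Then for every vertex v of K, g_K(p) = p·d_W(v) + (1−p)·d_B(v). -/

import Mathlib

/-- Colors for edges of a colored regularity graph. -/
inductive EColor : Type
  | white
  | gray
  | black
deriving DecidableEq

/-- A colored regularity graph (CRG) on a finite vertex type `V`: each vertex is
white or black (`vWhite v = true` means white), and each pair of distinct vertices
gets a symmetric edge color (white, gray or black). -/
structure CRG (V : Type) [Fintype V] where
  vWhite : V → Bool
  ecolor : V → V → EColor
  ecolor_symm : ∀ u v, ecolor u v = ecolor v u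

namespace CRG

variable {V : Type} [Fintype V] [DecidableEq V]

/-- The matrix `M_K(p)`. -/
noncomputable def M (K : CRG V) (p : ℝ) (u v : V) : ℝ :=
  if u = v then (if K.vWhite u then p else 1 - p)
  else
    match K.ecolor u v with
    | EColor.white => p
    | EColor.black => 1 - p
    | EColor.gray => 0

/-- The function `g_K(p)`: the minimum of `xᵀ M_K(p) x` over nonnegative weight
vectors summing to `1`. -/
noncomputable def g (K : CRG V) (p : ℝ) : ℝ :=
  sInf {r : ℝ | ∃ x : V → ℝ, (∀ v, 0 ≤ x v) ∧ (∑ v, x v) = 1 ∧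
    r = ∑ u, ∑ v, x u * K.M p u v * x v}

/-- The sub-CRG induced on a subset `s` of the vertices. -/
def sub (K : CRG V) (s : Finset V) : CRG {v // v ∈ s} where
  vWhite := fun v => K.vWhite v.1
  ecolor := fun u v => K.ecolor u.1 v.1
  ecolor_symm := fun u v => K.ecolor_symm u.1 v.1

/-- `K` is `p`-core if `g_K(p) < g_{K'}(p)` for every proper (nonempty) sub-CRG `K'`. -/
def IsPCore (K : CRG V) (p : ℝ) : Prop :=
  ∀ s : Finset V, s.Nonempty → s ≠ Finset.univ → K.g p < (K.sub s).g p

/-- `x` is an optimal weight vector for `K` at `p`. -/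
def IsOptWeight (K : CRG V) (p : ℝ) (x : V → ℝ) : Prop :=
  (∀ v, 0 ≤ x v) ∧ (∑ v, x v) = 1 ∧
    (∑ u, ∑ v, x u * K.M p u v * x v) = K.g p

/-- The gray degree `d_G(v)`: total weight of gray neighbors of `v`. -/
noncomputable def dG (K : CRG V) (x : V → ℝ) (v : V) : ℝ :=
  ∑ w ∈ Finset.univ.filter fun w => w ≠ v ∧ K.ecolor v w = EColor.gray, x w

/-- The white degree `d_W(v)`: total weight of white neighbors of `v`, including `v`
itself if `v` is white. -/
noncomputable def dW (K : CRG V) (x : V → ℝ) (v : V) : ℝ :=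
  (∑ w ∈ Finset.univ.filter fun w => w ≠ v ∧ K.ecolor v w = EColor.white, x w) +
    (if K.vWhite v then x v else 0)

/-- The black degree `d_B(v)`: total weight of black neighbors of `v`, including `v`
itself if `v` is black. -/
noncomputable def dB (K : CRG V) (x : V → ℝ) (v : V) : ℝ :=
  (∑ w ∈ Finset.univ.filter fun w => w ≠ v ∧ K.ecolor v w = EColor.black, x w) +
    (if K.vWhite v then 0 else x v)

/-- The number of gray neighbors of `v`. -/
def grayDeg (K : CRG V) (v : V) : ℕ :=
  (Finset.univ.filter fun w => w ≠ v ∧ K.ecolor v w = EColor.gray).card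

end CRG

/-- A graph `H` embeds in a CRG `K`, written `H ↦ K`. -/
def EmbedsIn {α : Type*} {V : Type} [Fintype V] (H : SimpleGraph α) (K : CRG V) : Prop :=
  ∃ φ : α → V,
    (∀ a b : α, H.Adj a b →
      (φ a = φ b ∧ K.vWhite (φ a) = false) ∨
      (φ a ≠ φ b ∧ (K.ecolor (φ a) (φ b) = EColor.black ∨ K.ecolor (φ a) (φ b) = EColor.gray))) ∧
    (∀ a b : α, a ≠ b → ¬H.Adj a b →
      (φ a = φ b ∧ K.vWhite (φ a) = true) ∨
      (φ a ≠ φ b ∧ (K.ecolor (φ a) (φ b) = EColor.white ∨ K.ecolor (φ a) (φ b) = EColor.gray)))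


section Aux

open Finset

variable {V : Type} [Fintype V] [DecidableEq V]

lemma aux_M_nonneg (K : CRG V) {p : ℝ} (hp : p ∈ Set.Ioo (0:ℝ) 1) (u v : V) :
    0 ≤ K.M p u v := by
  obtain ⟨h0, h1⟩ := hp
  unfold CRG.M
  split_ifs with h h2
  · linarith
  · linarith
  · rcases h' : K.ecolor u v <;> simp <;> linarith

lemma aux_M_symm (K : CRG V) (p : ℝ) (u v : V) : K.M p u v = K.M p v u := by
  unfold CRG.M
  rcases eq_or_ne u v with h | h
  · subst h; simp
  · simp [h, h.symm, K.ecolor_symm u v]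

lemma aux_g_le (K : CRG V) {p : ℝ} (hp : p ∈ Set.Ioo (0:ℝ) 1) {y : V → ℝ}
    (hy0 : ∀ v, 0 ≤ y v) (hy1 : (∑ v, y v) = 1) :
    K.g p ≤ ∑ u, ∑ w, y u * K.M p u w * y w := by
  apply csInf_le
  · refine ⟨0, ?_⟩
    rintro r ⟨z, hz0, hz1, rfl⟩
    refine Finset.sum_nonneg fun u _ => Finset.sum_nonneg fun w _ => ?_
    exact mul_nonneg (mul_nonneg (hz0 u) (aux_M_nonneg K hp u w)) (hz0 w)
  · exact ⟨y, hy0, hy1, rfl⟩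

lemma aux_sub_M (K : CRG V) (p : ℝ) (s : Finset V) (u w : {v // v ∈ s}) :
    (K.sub s).M p u w = K.M p u.1 w.1 := by
  unfold CRG.M
  simp only [CRG.sub, Subtype.ext_iff]
  split_ifs <;> simp_all

lemma aux_x_pos (K : CRG V) {p : ℝ} (hp : p ∈ Set.Ioo (0:ℝ) 1) (hcore : K.IsPCore p)
    {x : V → ℝ} (hx : K.IsOptWeight p x) (v : V) : 0 < x v := by
  obtain ⟨hx0, hx1, hxg⟩ := hx
  rcases (hx0 v).lt_or_eq with h | h
  · exact h
  exfalso
  set s : Finset V := Finset.univ.filter (fun w => x w ≠ 0) with hs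
  have hzero : ∀ w, w ∉ s → x w = 0 := by
    intro w hw; by_contra hne; exact hw (by simp [hs, hne])
  have hvs : v ∉ s := by simp [hs, ← h]
  have hsne : s.Nonempty := by
    by_contra hemp
    rw [Finset.not_nonempty_iff_eq_empty] at hemp
    have hall : ∀ w, x w = 0 := by
      intro w
      apply hzero
      simp [hemp]
    rw [Finset.sum_congr rfl (fun w _ => hall w)] at hx1
    simp at hx1
  have hsuniv : s ≠ Finset.univ := fun hh => hvs (hh ▸ Finset.mem_univ v)
  have hlt := hcore s hsne hsuniv
  set y : {w // w ∈ s} → ℝ := fun w => x w.1 with hy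
  have hy0 : ∀ w, 0 ≤ y w := fun w => hx0 w.1
  have hy1 : (∑ w, y w) = 1 := by
    rw [← hx1, hy]
    rw [Finset.sum_coe_sort s (fun w => x w)]
    apply Finset.sum_subset (Finset.subset_univ s)
    intro w _ hws
    exact hzero w hws
  have hQ : (∑ u, ∑ w, y u * (K.sub s).M p u w * y w)
      = ∑ u, ∑ w, x u * K.M p u w * x w := by
    have h1 : (∑ u, ∑ w, y u * (K.sub s).M p u w * y w)
        = ∑ u ∈ s, ∑ w ∈ s, x u * K.M p u w * x w := by
      rw [← Finset.sum_coe_sort s (fun u => ∑ w ∈ s, x u * K.M p u w * x w)]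
      apply Finset.sum_congr rfl
      intro u _
      rw [← Finset.sum_coe_sort s (fun w => x u.1 * K.M p u.1 w * x w)]
      apply Finset.sum_congr rfl
      intro w _
      rw [aux_sub_M]
    rw [h1]
    have h2 : ∀ u, (∑ w ∈ s, x u * K.M p u w * x w) = ∑ w, x u * K.M p u w * x w := by
      intro u
      apply Finset.sum_subset (Finset.subset_univ s)
      intro w _ hws
      rw [hzero w hws, mul_zero]
    calc ∑ u ∈ s, ∑ w ∈ s, x u * K.M p u w * x w
        = ∑ u ∈ s, ∑ w, x u * K.M p u w * x w :=
          Finset.sum_congr rfl (fun u _ => h2 u)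
      _ = ∑ u, ∑ w, x u * K.M p u w * x w := by
          apply Finset.sum_subset (Finset.subset_univ s)
          intro u _ hus
          simp [hzero u hus]
  have := aux_g_le (K.sub s) hp hy0 hy1
  rw [hQ, hxg] at this
  linarith

lemma aux_nonneg_small (a c δ : ℝ) (hδ : 0 < δ)
    (h : ∀ t : ℝ, 0 < t → t < δ → 0 ≤ a + t * c) : 0 ≤ a := by
  by_contra h'
  push_neg at h'
  rcases le_or_gt c 0 with hc | hc
  · have := h (δ/2) (by linarith) (by linarith)
    nlinarith
  · have ha2 : 0 < -a / (2*c) := div_pos (by linarith) (by linarith)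
    set t := min (δ/2) (-a/(2*c)) with ht
    have ht1 : 0 < t := lt_min (by linarith) ha2
    have ht2 : t < δ := lt_of_le_of_lt (min_le_left _ _) (by linarith)
    have h3 := h t ht1 ht2
    have h4 : t ≤ -a/(2*c) := min_le_right _ _
    have h5 : t * c ≤ (-a/(2*c)) * c := by nlinarith
    have h6 : (-a/(2*c)) * c = -a/2 := by field_simp
    nlinarith

end Aux

theorem pcore_localization_degrees {V : Type} [Fintype V] [DecidableEq V] [Nonempty V]
    (p : ℝ) (hp : p ∈ Set.Ioo (0 : ℝ) 1) (K : CRG V) (hcore : K.IsPCore p)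
    (x : V → ℝ) (hx : K.IsOptWeight p x) :
    ∀ v : V, K.g p = p * K.dW x v + (1 - p) * K.dB x v := by
  intro v
  have hxv : 0 < x v := aux_x_pos K hp hcore hx v
  obtain ⟨hx0, hx1, hxg⟩ := hx
  obtain ⟨hp0, hp1⟩ := hp
  have hxv1 : x v ≤ 1 := by
    rw [← hx1]
    exact Finset.single_le_sum (fun w _ => hx0 w) (Finset.mem_univ v)
  have expand : ∀ a b : ℝ,
      (∑ u, ∑ w, (a * x u + b * (if u = v then (1:ℝ) else 0)) * K.M p u w *
        (a * x w + b * (if w = v then (1:ℝ) else 0)))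
      = a^2 * K.g p + 2*a*b*(∑ w, K.M p v w * x w) + b^2 * K.M p v v := by
    intro a b
    have inner : ∀ u, (∑ w, K.M p u w * (a * x w + b * (if w = v then (1:ℝ) else 0)))
        = a * (∑ w, K.M p u w * x w) + b * K.M p u v := by
      intro u
      have hpt : ∀ w, K.M p u w * (a * x w + b * (if w = v then (1:ℝ) else 0))
          = a * (K.M p u w * x w) + (if w = v then b * K.M p u w else 0) := by
        intro w; split_ifs <;> ring
      rw [Finset.sum_congr rfl (fun w _ => hpt w)]
      simp only [Finset.sum_add_distrib, Finset.sum_ite_eq', Finset.mem_univ, if_true,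
        ← Finset.mul_sum]
    calc (∑ u, ∑ w, (a * x u + b * (if u = v then (1:ℝ) else 0)) * K.M p u w *
        (a * x w + b * (if w = v then (1:ℝ) else 0)))
        = ∑ u, (a * x u + b * (if u = v then (1:ℝ) else 0)) *
            (∑ w, K.M p u w * (a * x w + b * (if w = v then (1:ℝ) else 0))) := by
          apply Finset.sum_congr rfl; intro u _
          rw [Finset.mul_sum]
          apply Finset.sum_congr rfl; intro w _; ring
      _ = ∑ u, (a * x u + b * (if u = v then (1:ℝ) else 0)) *
            (a * (∑ w, K.M p u w * x w) + b * K.M p u v) := by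
          apply Finset.sum_congr rfl; intro u _; rw [inner]
      _ = ∑ u, (a^2 * (x u * (∑ w, K.M p u w * x w)) + a*b*(x u * K.M p u v)
            + (if u = v then (a*b*(∑ w, K.M p v w * x w) + b^2 * K.M p v v) else 0)) := by
          apply Finset.sum_congr rfl; intro u _
          split_ifs with h
          · subst h; ring
          · ring
      _ = a^2 * (∑ u, x u * (∑ w, K.M p u w * x w)) + a*b*(∑ u, x u * K.M p u v)
            + (a*b*(∑ w, K.M p v w * x w) + b^2 * K.M p v v) := by
          simp only [Finset.sum_add_distrib, Finset.sum_ite_eq', Finset.mem_univ, if_true,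
            ← Finset.mul_sum]
      _ = a^2 * K.g p + 2*a*b*(∑ w, K.M p v w * x w) + b^2 * K.M p v v := by
          have e1 : (∑ u, x u * (∑ w, K.M p u w * x w)) = K.g p := by
            rw [← hxg]
            apply Finset.sum_congr rfl; intro u _
            rw [Finset.mul_sum]
            apply Finset.sum_congr rfl; intro w _; ring
          have e2 : (∑ u, x u * K.M p u v) = ∑ w, K.M p v w * x w := by
            apply Finset.sum_congr rfl; intro u _
            rw [aux_M_symm]; ring
          rw [e1, e2]; ring
  set f : ℝ := ∑ w, K.M p v w * x w with hf
  set Mvv : ℝ := K.M p v v with hMvv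
  -- direction 1 : g ≤ f
  have hge : K.g p ≤ f := by
    have key : 0 ≤ 2*(f - K.g p) := by
      apply aux_nonneg_small _ (K.g p - 2*f + Mvv) 1 one_pos
      intro t ht0 ht1
      set y : V → ℝ := fun w => (1-t) * x w + t * (if w = v then (1:ℝ) else 0) with hy
      have hy0 : ∀ w, 0 ≤ y w := by
        intro w
        simp only [hy]
        have := hx0 w
        split_ifs <;> nlinarith
      have hy1 : (∑ w, y w) = 1 := by
        rw [hy]
        simp only [Finset.sum_add_distrib, ← Finset.mul_sum, hx1, mul_ite, mul_one, mul_zero,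
          Finset.sum_ite_eq', Finset.mem_univ, if_true]
        ring
      have h1 := aux_g_le K ⟨hp0, hp1⟩ hy0 hy1
      rw [hy] at h1
      rw [expand (1-t) t] at h1
      have h2 : 0 ≤ t * (2*(f - K.g p) + t * (K.g p - 2*f + Mvv)) := by nlinarith
      nlinarith
    linarith
  -- direction 2 : f ≤ g
  have hle : f ≤ K.g p := by
    have key : 0 ≤ 2*(K.g p - f) := by
      apply aux_nonneg_small _ (Mvv - K.g p) (x v) hxv
      intro t ht0 ht1
      have hlt1 : t < 1 := lt_of_lt_of_le ht1 hxv1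
      have h1t : (0:ℝ) < 1 - t := by linarith
      have hne : (1:ℝ) - t ≠ 0 := ne_of_gt h1t
      set a : ℝ := (1-t)⁻¹ with ha
      set b : ℝ := -t * (1-t)⁻¹ with hb
      have haa : a * (1-t) = 1 := inv_mul_cancel₀ hne
      have hbb : b * (1-t) = -t := by rw [hb]; field_simp
      set y : V → ℝ := fun w => a * x w + b * (if w = v then (1:ℝ) else 0) with hy
      have hy0 : ∀ w, 0 ≤ y w := by
        intro w
        simp only [hy]
        have hxw := hx0 w
        have hainv : 0 < a := by rw [ha]; positivity
        split_ifs with h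
        · rw [h]
          have h7 : a * x v + b * 1 = (x v - t) * a := by rw [ha, hb]; field_simp; ring
          rw [h7]
          apply mul_nonneg (by linarith) (le_of_lt hainv)
        · simp only [mul_zero, add_zero]
          positivity
      have hy1 : (∑ w, y w) = 1 := by
        rw [hy]
        simp only [Finset.sum_add_distrib, ← Finset.mul_sum, hx1, mul_ite, mul_one, mul_zero,
          Finset.sum_ite_eq', Finset.mem_univ, if_true]
        rw [ha, hb]; field_simp; ring
      have h1 := aux_g_le K ⟨hp0, hp1⟩ hy0 hy1
      rw [hy] at h1
      rw [expand a b] at h1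
      have h3 : K.g p * (1-t)^2 ≤ (a^2 * K.g p + 2*a*b*f + b^2 * Mvv) * (1-t)^2 := by
        apply mul_le_mul_of_nonneg_right _ (sq_nonneg _)
        rw [hf, hMvv]
        exact h1
      have h4 : (a^2 * K.g p + 2*a*b*f + b^2 * Mvv) * (1-t)^2
          = K.g p - 2*t*f + t^2 * Mvv := by
        rw [ha, hb]; field_simp; ring
      rw [h4] at h3
      have h5 : 0 ≤ t * (2*(K.g p - f) + t * (Mvv - K.g p)) := by nlinarith
      nlinarith
    linarith
  have hgf : K.g p = f := le_antisymm hge hle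
  rw [hgf, hf]
  -- final computation : f = p dW + (1-p) dB
  have key : ∀ w, K.M p v w * x w =
      p * (if w ≠ v ∧ K.ecolor v w = EColor.white then x w else 0)
      + (1-p) * (if w ≠ v ∧ K.ecolor v w = EColor.black then x w else 0)
      + (if w = v then (if K.vWhite v then p * x v else (1-p) * x v) else 0) := by
    intro w
    rcases eq_or_ne w v with h | h
    · subst h
      unfold CRG.M
      simp only [if_true, ne_eq, not_true_eq_false, false_and, if_false, if_pos rfl]
      split_ifs <;> ring
    · unfold CRG.M
      rcases hc : K.ecolor v w with _|_|_ <;> simp [h, h.symm, hc]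
  rw [Finset.sum_congr rfl (fun w _ => key w)]
  unfold CRG.dW CRG.dB
  rw [Finset.sum_filter, Finset.sum_filter]
  simp only [Finset.sum_add_distrib, ← Finset.mul_sum, Finset.sum_ite_eq', Finset.mem_univ,
    if_true]
  rcases hW : K.vWhite v <;> simp [hW] <;> ring
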